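/- Let $m \in \mathbb{N}$ and suppose the rational numbers $a_{is}$ ($0 \leq i \leq s \leq m$, $a_{ss} = 1$) satisfy the prime asymptotic hypothesis (210). Then for every $n \in \mathbb{N}$, $\sum_{k \leq n} p_k = \frac{n^2}{2} \left( g(n) - h_m(n) + \sum_{s=1}^{m} \frac{(-1)^{s+1}}{s\log^s n} \sum_{i=0}^s a_{is} \sum_{j=0}^{m-s} \sum_{r=0}^{\min\{i,j\}} \frac{b_{s,i,j,r}(\log \log n)^{i-r}}{2^j\log^j n} \right) + O(n\, c_m(n))$ as $n \to \infty$. -/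

import Mathlib

open Filter Real

/-- `nthPrime k` is the `k`-th prime number `p_k` (so `p_1 = 2`, `p_2 = 3`, ...). -/
noncomputable def nthPrime (k : ℕ) : ℕ := Nat.nth Nat.Prime (k - 1)

/-- `c_m(x) = x (log log x)^{m+1} / log^{m+1} x`. -/
noncomputable def cAux (m : ℕ) (x : ℝ) : ℝ :=
  x * Real.log (Real.log x) ^ (m + 1) / Real.log x ^ (m + 1)

/-- The prime asymptotic hypothesis (210): with coefficients `a i s ∈ ℚ`,
`p_n = n (log n + log log n - 1 + ∑_{s=1}^m ((-1)^{s+1} / (s log^s n)) ∑_{i=0}^s a_{is} (log log n)^i)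
  + O(c_m(n))` as `n → ∞`. -/
def PrimeHyp (m : ℕ) (a : ℕ → ℕ → ℚ) : Prop :=
  (fun n : ℕ =>
      (nthPrime n : ℝ) -
        (n : ℝ) *
          (Real.log n + Real.log (Real.log n) - 1 +
            ∑ s ∈ Finset.Icc 1 m, (-1) ^ (s + 1) / ((s : ℝ) * Real.log n ^ s) *
              ∑ i ∈ Finset.range (s + 1), (a i s : ℝ) * Real.log (Real.log n) ^ i))
    =O[atTop] fun n : ℕ => cAux m n

/-- `g(x) = log x + log log x - 3/2`. -/
noncomputable def gAux (x : ℝ) : ℝ := Real.log x + Real.log (Real.log x) - 3 / 2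

/-- `h_m(x) = ∑_{j=1}^m (j-1)! / (2^j log^j x)`. -/
noncomputable def hAux (m : ℕ) (x : ℝ) : ℝ :=
  ∑ j ∈ Finset.Icc 1 m, (Nat.factorial (j - 1) : ℝ) / (2 ^ j * Real.log x ^ j)

/-- The recurrence defining the integers `b s i j r` (for `r ≤ j`):
`b s i 0 0 = 1`; for `j ≥ 1`, `b s i j j = b s i (j-1) (j-1) * (-(i-(j-1)))`;
for `j ≥ 1`, `b s i j 0 = b s i (j-1) 0 * (s+j-1)`; and for `j > r ≥ 1`,
`b s i j r = b s i (j-1) r * (s+j-1) + b s i (j-1) (r-1) * (-(i-(r-1)))`. -/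
def BRec (b : ℕ → ℕ → ℕ → ℕ → ℤ) : Prop :=
  (∀ s i : ℕ, b s i 0 0 = 1) ∧
  (∀ s i j : ℕ, 1 ≤ j →
    b s i j j = b s i (j - 1) (j - 1) * (-((i : ℤ) - ((j : ℤ) - 1)))) ∧
  (∀ s i j : ℕ, 1 ≤ j →
    b s i j 0 = b s i (j - 1) 0 * ((s : ℤ) + (j : ℤ) - 1)) ∧
  (∀ s i j r : ℕ, 1 ≤ r → r < j →
    b s i j r = b s i (j - 1) r * ((s : ℤ) + (j : ℤ) - 1)
      + b s i (j - 1) (r - 1) * (-((i : ℤ) - ((r : ℤ) - 1))))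


namespace SP

noncomputable def llog (x : ℝ) : ℝ := Real.log (Real.log x)

section

variable (m : ℕ) (a : ℕ → ℕ → ℚ) (b : ℕ → ℕ → ℕ → ℕ → ℤ)

/-- statement-form G -/
noncomputable def Gf (x : ℝ) : ℝ :=
  Real.log x + llog x - 1 +
    ∑ s ∈ Finset.Icc 1 m, (-1) ^ (s + 1) / ((s : ℝ) * Real.log x ^ s) *
      ∑ i ∈ Finset.range (s + 1), (a i s : ℝ) * llog x ^ i

noncomputable def Ff (x : ℝ) : ℝ := x * Gf m a x

/-- statement-form H -/
noncomputable def Hf (x : ℝ) : ℝ :=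
  gAux x - hAux m x +
    ∑ s ∈ Finset.Icc 1 m, (-1) ^ (s + 1) / ((s : ℝ) * Real.log x ^ s) *
      ∑ i ∈ Finset.range (s + 1), (a i s : ℝ) *
        ∑ j ∈ Finset.range (m - s + 1), ∑ r ∈ Finset.range (min i j + 1),
          (b s i j r : ℝ) * llog x ^ (i - r) / (2 ^ j * Real.log x ^ j)

noncomputable def Tf (x : ℝ) : ℝ := x ^ 2 / 2 * Hf m a b x

/-- normal-form G -/
noncomputable def Gm (x : ℝ) : ℝ :=
  Real.log x + llog x - 1 +
    ∑ s ∈ Finset.Icc 1 m, (-1) ^ (s + 1) / (s : ℝ) *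
      ∑ i ∈ Finset.range (s + 1), (a i s : ℝ) * (llog x ^ i / Real.log x ^ s)

/-- normal-form H -/
noncomputable def Hm (x : ℝ) : ℝ :=
  (Real.log x + llog x - 3 / 2) -
    (∑ j ∈ Finset.Icc 1 m, (Nat.factorial (j - 1) : ℝ) * ((2:ℝ) ^ j)⁻¹ *
      (llog x ^ 0 / Real.log x ^ j)) +
    ∑ s ∈ Finset.Icc 1 m, (-1) ^ (s + 1) / (s : ℝ) *
      ∑ i ∈ Finset.range (s + 1), (a i s : ℝ) *
        ∑ j ∈ Finset.range (m - s + 1), ((2:ℝ) ^ j)⁻¹ *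
          ∑ r ∈ Finset.range (min i j + 1),
            (b s i j r : ℝ) * (llog x ^ (i - r) / Real.log x ^ (s + j))

/-- derivative of Gm -/
noncomputable def DG (x : ℝ) : ℝ :=
  x⁻¹ + (Real.log x * x)⁻¹ +
    ∑ s ∈ Finset.Icc 1 m, (-1) ^ (s + 1) / (s : ℝ) *
      ∑ i ∈ Finset.range (s + 1), (a i s : ℝ) *
        (((i : ℝ) * llog x ^ (i - 1) - (s : ℝ) * llog x ^ i) / (x * Real.log x ^ (s + 1)))

/-- derivative of Hm -/
noncomputable def DH (x : ℝ) : ℝ :=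
  (x⁻¹ + (Real.log x * x)⁻¹) -
    (∑ j ∈ Finset.Icc 1 m, (Nat.factorial (j - 1) : ℝ) * ((2:ℝ) ^ j)⁻¹ *
      ((((0:ℕ) : ℝ) * llog x ^ (0 - 1) - (j : ℝ) * llog x ^ 0) / (x * Real.log x ^ (j + 1)))) +
    ∑ s ∈ Finset.Icc 1 m, (-1) ^ (s + 1) / (s : ℝ) *
      ∑ i ∈ Finset.range (s + 1), (a i s : ℝ) *
        ∑ j ∈ Finset.range (m - s + 1), ((2:ℝ) ^ j)⁻¹ *
          ∑ r ∈ Finset.range (min i j + 1), (b s i j r : ℝ) *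
            ((((i - r : ℕ) : ℝ) * llog x ^ (i - r - 1) - ((s + j : ℕ) : ℝ) * llog x ^ (i - r)) /
              (x * Real.log x ^ (s + j + 1)))

/-- error function -/
noncomputable def Em (x : ℝ) : ℝ :=
  (Nat.factorial m : ℝ) * ((2:ℝ) ^ (m + 1))⁻¹ * (Real.log x ^ (m + 1))⁻¹
  - ∑ s ∈ Finset.Icc 1 m, (-1) ^ (s + 1) / (s : ℝ) *
      ∑ i ∈ Finset.range (s + 1), (a i s : ℝ) *
        (((2:ℝ) ^ (m - s + 1) * Real.log x ^ (s + (m - s + 1)))⁻¹ *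
          ∑ r ∈ Finset.range (min i (m - s + 1) + 1),
            (b s i (m - s + 1) r : ℝ) * llog x ^ (i - r))

noncomputable def Ef (x : ℝ) : ℝ := x * Em m a b x

end

section

variable {m : ℕ} {a : ℕ → ℕ → ℚ} {b : ℕ → ℕ → ℕ → ℕ → ℤ}

lemma Gf_eq_Gm : Gf m a = Gm m a := by
  funext x
  simp only [Gf, Gm, Finset.mul_sum]
  congr 1
  exact Finset.sum_congr rfl fun s _ => Finset.sum_congr rfl fun i _ => by
    simp only [div_eq_mul_inv, mul_inv]; ring

lemma Hf_eq_Hm : Hf m a b = Hm m a b := by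
  funext x
  simp only [Hf, Hm, gAux, hAux, llog, Finset.mul_sum]
  congr 1
  · congr 1
    exact Finset.sum_congr rfl fun j _ => by
      simp only [div_eq_mul_inv, mul_inv, pow_zero]; ring
  · exact Finset.sum_congr rfl fun s _ => Finset.sum_congr rfl fun i _ =>
      Finset.sum_congr rfl fun j _ => Finset.sum_congr rfl fun r _ => by
        simp only [div_eq_mul_inv, mul_inv, pow_add]; ring

lemma hasDerivAt_llog {x : ℝ} (hx : x ≠ 0) (hl : Real.log x ≠ 0) :
    HasDerivAt llog ((Real.log x * x)⁻¹) x := by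
  have h := (Real.hasDerivAt_log hl).comp x (Real.hasDerivAt_log hx)
  rw [show llog = Real.log ∘ Real.log from rfl, mul_inv]
  exact h

lemma hasDerivAt_yl (p q : ℕ) {x : ℝ} (hx : x ≠ 0) (hl : Real.log x ≠ 0) :
    HasDerivAt (fun t => llog t ^ p / Real.log t ^ q)
      (((p : ℝ) * llog x ^ (p - 1) - (q : ℝ) * llog x ^ p) / (x * Real.log x ^ (q + 1))) x := by
  have hnum := (hasDerivAt_llog hx hl).pow p
  have hden := (Real.hasDerivAt_log hx).pow q
  have h := hnum.div hden (pow_ne_zero q hl)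
  have h' : HasDerivAt (fun t => llog t ^ p / Real.log t ^ q)
      (((p : ℝ) * llog x ^ (p - 1) * (Real.log x * x)⁻¹ * Real.log x ^ q
        - llog x ^ p * ((q : ℝ) * Real.log x ^ (q - 1) * x⁻¹)) / (Real.log x ^ q) ^ 2) x := h
  convert h' using 1
  rcases q with _ | q
  · simp only [pow_zero, Nat.cast_zero, zero_mul, mul_zero, sub_zero, one_pow, div_one,
      pow_one, mul_one]
    rw [div_eq_mul_inv, mul_inv]
    ring
  · have h1 : q + 1 - 1 = q := rfl
    rw [h1]
    field_simp
    ring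

lemma hasDerivAt_Gm {x : ℝ} (hx : x ≠ 0) (hl : Real.log x ≠ 0) :
    HasDerivAt (Gm m a) (DG m a x) x := by
  exact (((Real.hasDerivAt_log hx).add (hasDerivAt_llog hx hl)).sub_const 1).add
    (HasDerivAt.fun_sum fun s _ => HasDerivAt.const_mul _
      (HasDerivAt.fun_sum fun i _ => HasDerivAt.const_mul _ (hasDerivAt_yl i s hx hl)))

lemma hasDerivAt_Hm {x : ℝ} (hx : x ≠ 0) (hl : Real.log x ≠ 0) :
    HasDerivAt (Hm m a b) (DH m a b x) x := by
  exact ((((Real.hasDerivAt_log hx).add (hasDerivAt_llog hx hl)).sub_const (3/2)).sub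
    (HasDerivAt.fun_sum fun j _ => HasDerivAt.const_mul _ (hasDerivAt_yl 0 j hx hl))).add
    (HasDerivAt.fun_sum fun s _ => HasDerivAt.const_mul _
      (HasDerivAt.fun_sum fun i _ => HasDerivAt.const_mul _
        (HasDerivAt.fun_sum fun j _ => HasDerivAt.const_mul _
          (HasDerivAt.fun_sum fun r _ => HasDerivAt.const_mul _
            (hasDerivAt_yl (i - r) (s + j) hx hl)))))

lemma hasDerivAt_Ff {x : ℝ} (hx : x ≠ 0) (hl : Real.log x ≠ 0) :
    HasDerivAt (Ff m a) (Gm m a x + x * DG m a x) x := by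
  have h := (hasDerivAt_id x).mul (hasDerivAt_Gm (a := a) (m := m) hx hl)
  have : Ff m a = fun t => t * Gm m a t := by
    funext t; rw [Ff, Gf_eq_Gm]
  rw [this]
  have h' : HasDerivAt (fun t => t * Gm m a t) (1 * Gm m a x + x * DG m a x) x := h
  simpa [one_mul] using h'

lemma hasDerivAt_Tf {x : ℝ} (hx : x ≠ 0) (hl : Real.log x ≠ 0) :
    HasDerivAt (Tf m a b) (x * Hm m a b x + x ^ 2 / 2 * DH m a b x) x := by
  have h := (((hasDerivAt_id x).pow 2).div_const 2).mul (hasDerivAt_Hm (b := b) (a := a) (m := m) hx hl)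
  have hT : Tf m a b = fun t => t ^ 2 / 2 * Hm m a b t := by
    funext t; rw [Tf, Hf_eq_Hm]
  rw [hT]
  refine h.congr_deriv ?_
  simp only [id_eq]
  norm_num

/-- the recurrence, translated to real polynomial coefficients -/
lemma wA (hb : BRec b) (s i j : ℕ) (hj : 1 ≤ j) (Y : ℝ) :
    ∑ r ∈ Finset.range (min i j + 1), (b s i j r : ℝ) * Y ^ (i - r)
      = ((s : ℝ) + (j : ℝ) - 1) *
          ∑ r ∈ Finset.range (min i (j - 1) + 1), (b s i (j - 1) r : ℝ) * Y ^ (i - r)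
        - ∑ r ∈ Finset.range (min i (j - 1) + 1),
            (b s i (j - 1) r : ℝ) * ((i - r : ℕ) : ℝ) * Y ^ (i - r - 1) := by
  obtain ⟨j', rfl⟩ : ∃ j', j = j' + 1 := ⟨j - 1, by omega⟩
  obtain ⟨hb0, hb2, hb3, hb4⟩ := hb
  simp only [Nat.add_sub_cancel]
  have h0 : (b s i (j' + 1) 0 : ℝ) = ((s : ℝ) + (↑(j' + 1)) - 1) * (b s i j' 0 : ℝ) := by
    have h := hb3 s i (j' + 1) (by omega)
    simp only [Nat.add_sub_cancel] at h
    rw [h]; push_cast; ring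
  rcases le_or_gt i j' with hij | hij
  · rw [min_eq_left (le_trans hij (Nat.le_succ j')), min_eq_left hij]
    rw [Finset.sum_range_succ' (fun r => (b s i (j' + 1) r : ℝ) * Y ^ (i - r)) i]
    rw [Finset.sum_range_succ' (fun r => (b s i j' r : ℝ) * Y ^ (i - r)) i]
    rw [Finset.sum_range_succ
      (fun r => (b s i j' r : ℝ) * ((i - r : ℕ) : ℝ) * Y ^ (i - r - 1)) i]
    have hmid : ∀ r ∈ Finset.range i,
        (b s i (j' + 1) (r + 1) : ℝ) * Y ^ (i - (r + 1))
          = (((s : ℝ) + (↑(j' + 1)) - 1) * ((b s i j' (r + 1) : ℝ) * Y ^ (i - (r + 1)))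
            - (b s i j' r : ℝ) * ((i - r : ℕ) : ℝ) * Y ^ (i - r - 1)) := by
      intro r hr
      have hr' : r < i := Finset.mem_range.mp hr
      have hrec := hb4 s i (j' + 1) (r + 1) (by omega) (by omega)
      simp only [Nat.add_sub_cancel] at hrec
      rw [hrec]
      have e1 : i - r - 1 = i - (r + 1) := by omega
      rw [e1]
      push_cast [Nat.cast_sub (by omega : r ≤ i)]
      ring
    rw [Finset.sum_congr rfl hmid, Finset.sum_sub_distrib, h0]
    have htop : (b s i j' i : ℝ) * ((i - i : ℕ) : ℝ) * Y ^ (i - i - 1) = 0 := by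
      simp [Nat.sub_self]
    rw [htop, mul_add, Finset.mul_sum]
    ring
  · rw [min_eq_right (by omega : j' + 1 ≤ i), min_eq_right (le_of_lt hij)]
    rw [Finset.sum_range_succ (fun r => (b s i (j' + 1) r : ℝ) * Y ^ (i - r)) (j' + 1)]
    rw [Finset.sum_range_succ' (fun r => (b s i (j' + 1) r : ℝ) * Y ^ (i - r)) j']
    rw [Finset.sum_range_succ' (fun r => (b s i j' r : ℝ) * Y ^ (i - r)) j']
    rw [Finset.sum_range_succ
      (fun r => (b s i j' r : ℝ) * ((i - r : ℕ) : ℝ) * Y ^ (i - r - 1)) j']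
    have hmid : ∀ r ∈ Finset.range j',
        (b s i (j' + 1) (r + 1) : ℝ) * Y ^ (i - (r + 1))
          = (((s : ℝ) + (↑(j' + 1)) - 1) * ((b s i j' (r + 1) : ℝ) * Y ^ (i - (r + 1)))
            - (b s i j' r : ℝ) * ((i - r : ℕ) : ℝ) * Y ^ (i - r - 1)) := by
      intro r hr
      have hr' : r < j' := Finset.mem_range.mp hr
      have hrec := hb4 s i (j' + 1) (r + 1) (by omega) (by omega)
      simp only [Nat.add_sub_cancel] at hrec
      rw [hrec]
      have e1 : i - r - 1 = i - (r + 1) := by omega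
      rw [e1]
      push_cast [Nat.cast_sub (by omega : r ≤ i)]
      ring
    have htop : (b s i (j' + 1) (j' + 1) : ℝ) * Y ^ (i - (j' + 1))
        = -((b s i j' j' : ℝ) * ((i - j' : ℕ) : ℝ) * Y ^ (i - j' - 1)) := by
      have h := hb2 s i (j' + 1) (by omega)
      simp only [Nat.add_sub_cancel] at h
      rw [h]
      have e1 : i - j' - 1 = i - (j' + 1) := by omega
      rw [e1]
      push_cast [Nat.cast_sub (by omega : j' ≤ i)]
      ring
    rw [Finset.sum_congr rfl hmid, Finset.sum_sub_distrib, h0, htop, mul_add, Finset.mul_sum]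
    ring

lemma xcancel {x : ℝ} (hx : x ≠ 0) (c A B : ℝ) :
    x / 2 * (c * (A / (x * B))) = c * (A / (2 * B)) := by
  rcases eq_or_ne B 0 with hB | hB
  · simp [hB]
  · field_simp

/-- the telescoping block identity -/
lemma block2 (hb : BRec b) (s i M : ℕ) {x : ℝ} (hx : x ≠ 0) (Y L : ℝ) :
    (∑ j ∈ Finset.range (M + 1), ((2:ℝ) ^ j)⁻¹ *
        ∑ r ∈ Finset.range (min i j + 1), (b s i j r : ℝ) * (Y ^ (i - r) / L ^ (s + j)))
    + x / 2 * ∑ j ∈ Finset.range (M + 1), ((2:ℝ) ^ j)⁻¹ *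
        ∑ r ∈ Finset.range (min i j + 1), (b s i j r : ℝ) *
          ((((i - r : ℕ) : ℝ) * Y ^ (i - r - 1) - ((s + j : ℕ) : ℝ) * Y ^ (i - r)) /
            (x * L ^ (s + j + 1)))
    = Y ^ i / L ^ s - ((2:ℝ) ^ (M + 1) * L ^ (s + (M + 1)))⁻¹ *
        ∑ r ∈ Finset.range (min i (M + 1) + 1), (b s i (M + 1) r : ℝ) * Y ^ (i - r) := by
  rw [Finset.mul_sum, ← Finset.sum_add_distrib]
  have key : ∀ j ∈ Finset.range (M + 1),
      ((2:ℝ) ^ j)⁻¹ *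
          (∑ r ∈ Finset.range (min i j + 1), (b s i j r : ℝ) * (Y ^ (i - r) / L ^ (s + j)))
        + x / 2 * (((2:ℝ) ^ j)⁻¹ *
          ∑ r ∈ Finset.range (min i j + 1), (b s i j r : ℝ) *
            ((((i - r : ℕ) : ℝ) * Y ^ (i - r - 1) - ((s + j : ℕ) : ℝ) * Y ^ (i - r)) /
              (x * L ^ (s + j + 1))))
      = (fun j => ((2:ℝ) ^ j * L ^ (s + j))⁻¹ *
            ∑ r ∈ Finset.range (min i j + 1), (b s i j r : ℝ) * Y ^ (i - r)) j
        - (fun j => ((2:ℝ) ^ j * L ^ (s + j))⁻¹ *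
            ∑ r ∈ Finset.range (min i j + 1), (b s i j r : ℝ) * Y ^ (i - r)) (j + 1) := by
    intro j hj
    simp only []
    have e1 : ∑ r ∈ Finset.range (min i j + 1), (b s i j r : ℝ) * (Y ^ (i - r) / L ^ (s + j))
        = (∑ r ∈ Finset.range (min i j + 1), (b s i j r : ℝ) * Y ^ (i - r)) / L ^ (s + j) := by
      rw [Finset.sum_div]
      exact Finset.sum_congr rfl fun r _ => (mul_div_assoc _ _ _).symm
    have e2 : ∑ r ∈ Finset.range (min i j + 1), (b s i j r : ℝ) *
          ((((i - r : ℕ) : ℝ) * Y ^ (i - r - 1) - ((s + j : ℕ) : ℝ) * Y ^ (i - r)) /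
            (x * L ^ (s + j + 1)))
        = ((∑ r ∈ Finset.range (min i j + 1),
              (b s i j r : ℝ) * ((i - r : ℕ) : ℝ) * Y ^ (i - r - 1))
            - ((s + j : ℕ) : ℝ) *
              ∑ r ∈ Finset.range (min i j + 1), (b s i j r : ℝ) * Y ^ (i - r)) /
            (x * L ^ (s + j + 1)) := by
      rw [Finset.mul_sum, ← Finset.sum_sub_distrib, Finset.sum_div]
      refine Finset.sum_congr rfl fun r _ => ?_
      ring
    rw [e1, e2, xcancel hx]
    have hw := wA hb s i (j + 1) (by omega) Y
    simp only [Nat.add_sub_cancel] at hw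
    rw [hw]
    push_cast
    ring
  rw [Finset.sum_congr rfl key, Finset.sum_range_sub']
  have hf0 : ((2:ℝ) ^ 0 * L ^ (s + 0))⁻¹ *
      ∑ r ∈ Finset.range (min i 0 + 1), (b s i 0 r : ℝ) * Y ^ (i - r) = Y ^ i / L ^ s := by
    simp only [pow_zero, one_mul, Nat.add_zero, Nat.min_zero, zero_add, Finset.range_one,
      Finset.sum_singleton, hb.1, Int.cast_one, Nat.sub_zero, one_mul]
    rw [div_eq_mul_inv, mul_comm]
  rw [hf0]

/-- the key identity -/
lemma key_ident (hb : BRec b) {x : ℝ} (hx : x ≠ 0) :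
    x * Hm m a b x + x ^ 2 / 2 * DH m a b x = Ff m a x + Ef m a b x := by
  have main : Hm m a b x + x / 2 * DH m a b x = Gm m a x + Em m a b x := by
    have hA : (Real.log x + llog x - 3 / 2) + x / 2 * (x⁻¹ + (Real.log x * x)⁻¹)
        = Real.log x + llog x - 1 + (2 * Real.log x)⁻¹ := by
      have h1 : x * x⁻¹ = 1 := mul_inv_cancel₀ hx
      rw [mul_inv, mul_inv]
      linear_combination (1 / 2 + (Real.log x)⁻¹ / 2) * h1
    have hB : (∑ j ∈ Finset.Icc 1 m, (Nat.factorial (j - 1) : ℝ) * ((2:ℝ) ^ j)⁻¹ *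
          (llog x ^ 0 / Real.log x ^ j))
        + x / 2 * ∑ j ∈ Finset.Icc 1 m, (Nat.factorial (j - 1) : ℝ) * ((2:ℝ) ^ j)⁻¹ *
          ((((0:ℕ) : ℝ) * llog x ^ (0 - 1) - (j : ℝ) * llog x ^ 0) / (x * Real.log x ^ (j + 1)))
        = (2 * Real.log x)⁻¹
          - (Nat.factorial m : ℝ) * ((2:ℝ) ^ (m + 1))⁻¹ * (Real.log x ^ (m + 1))⁻¹ := by
      rw [Finset.mul_sum, ← Finset.sum_add_distrib, ← Finset.Ico_add_one_right_eq_Icc,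
        Finset.sum_Ico_eq_sum_range]
      simp only [Nat.add_sub_cancel]
      have key : ∀ k ∈ Finset.range m,
          ((Nat.factorial (1 + k - 1) : ℝ) * ((2:ℝ) ^ (1 + k))⁻¹ *
            (llog x ^ 0 / Real.log x ^ (1 + k))
          + x / 2 * ((Nat.factorial (1 + k - 1) : ℝ) * ((2:ℝ) ^ (1 + k))⁻¹ *
            ((((0:ℕ) : ℝ) * llog x ^ (0 - 1) - ((1 + k : ℕ) : ℝ) * llog x ^ 0) /
              (x * Real.log x ^ (1 + k + 1)))))
          = (fun k => (Nat.factorial k : ℝ) * ((2:ℝ) ^ (k + 1))⁻¹ *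
              (Real.log x ^ (k + 1))⁻¹) k
            - (fun k => (Nat.factorial k : ℝ) * ((2:ℝ) ^ (k + 1))⁻¹ *
              (Real.log x ^ (k + 1))⁻¹) (k + 1) := by
        intro k _
        simp only [Nat.add_sub_cancel, pow_zero, Nat.cast_zero, zero_mul, mul_one, zero_sub]
        rw [xcancel hx]
        have e1 : 1 + k - 1 = k := by omega
        rw [e1]
        have e2 : (Nat.factorial (k + 1) : ℝ) = ((k : ℝ) + 1) * (Nat.factorial k : ℝ) := by
          rw [Nat.factorial_succ]; push_cast; ring
        have e3 : (1:ℝ) / Real.log x ^ (1 + k) = (Real.log x ^ (1 + k))⁻¹ := one_div _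
        rw [e2]
        push_cast
        have e4 : 1 + k + 1 = k + 2 := by omega
        have e5 : 1 + k = k + 1 := by omega
        rw [e4, e5]
        ring
      rw [Finset.sum_congr rfl key, Finset.sum_range_sub']
      simp only [Nat.factorial_zero, Nat.cast_one, one_mul, pow_one, zero_add]
      rw [mul_inv]
    have hC : (∑ s ∈ Finset.Icc 1 m, (-1) ^ (s + 1) / (s : ℝ) *
          ∑ i ∈ Finset.range (s + 1), (a i s : ℝ) *
            ∑ j ∈ Finset.range (m - s + 1), ((2:ℝ) ^ j)⁻¹ *
              ∑ r ∈ Finset.range (min i j + 1),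
                (b s i j r : ℝ) * (llog x ^ (i - r) / Real.log x ^ (s + j)))
        + x / 2 * ∑ s ∈ Finset.Icc 1 m, (-1) ^ (s + 1) / (s : ℝ) *
            ∑ i ∈ Finset.range (s + 1), (a i s : ℝ) *
              ∑ j ∈ Finset.range (m - s + 1), ((2:ℝ) ^ j)⁻¹ *
                ∑ r ∈ Finset.range (min i j + 1), (b s i j r : ℝ) *
                  ((((i - r : ℕ) : ℝ) * llog x ^ (i - r - 1)
                      - ((s + j : ℕ) : ℝ) * llog x ^ (i - r)) /
                    (x * Real.log x ^ (s + j + 1)))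
        = (∑ s ∈ Finset.Icc 1 m, (-1) ^ (s + 1) / (s : ℝ) *
            ∑ i ∈ Finset.range (s + 1), (a i s : ℝ) * (llog x ^ i / Real.log x ^ s))
          - ∑ s ∈ Finset.Icc 1 m, (-1) ^ (s + 1) / (s : ℝ) *
              ∑ i ∈ Finset.range (s + 1), (a i s : ℝ) *
                (((2:ℝ) ^ (m - s + 1) * Real.log x ^ (s + (m - s + 1)))⁻¹ *
                  ∑ r ∈ Finset.range (min i (m - s + 1) + 1),
                    (b s i (m - s + 1) r : ℝ) * llog x ^ (i - r)) := by
      rw [Finset.mul_sum, ← Finset.sum_add_distrib, ← Finset.sum_sub_distrib]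
      refine Finset.sum_congr rfl fun s _ => ?_
      have step : ∀ i ∈ Finset.range (s + 1),
          ((a i s : ℝ) * ∑ j ∈ Finset.range (m - s + 1), ((2:ℝ) ^ j)⁻¹ *
              ∑ r ∈ Finset.range (min i j + 1),
                (b s i j r : ℝ) * (llog x ^ (i - r) / Real.log x ^ (s + j)))
            + x / 2 * ((a i s : ℝ) *
              ∑ j ∈ Finset.range (m - s + 1), ((2:ℝ) ^ j)⁻¹ *
                ∑ r ∈ Finset.range (min i j + 1), (b s i j r : ℝ) *
                  ((((i - r : ℕ) : ℝ) * llog x ^ (i - r - 1)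
                      - ((s + j : ℕ) : ℝ) * llog x ^ (i - r)) /
                    (x * Real.log x ^ (s + j + 1))))
          = (a i s : ℝ) * (llog x ^ i / Real.log x ^ s)
            - (a i s : ℝ) *
                (((2:ℝ) ^ (m - s + 1) * Real.log x ^ (s + (m - s + 1)))⁻¹ *
                  ∑ r ∈ Finset.range (min i (m - s + 1) + 1),
                    (b s i (m - s + 1) r : ℝ) * llog x ^ (i - r)) := by
        intro i _
        have hbl := block2 hb s i (m - s) hx (llog x) (Real.log x)
        calc (a i s : ℝ) * _ + x / 2 * ((a i s : ℝ) * _)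
            = (a i s : ℝ) * ((∑ j ∈ Finset.range (m - s + 1), ((2:ℝ) ^ j)⁻¹ *
                ∑ r ∈ Finset.range (min i j + 1),
                  (b s i j r : ℝ) * (llog x ^ (i - r) / Real.log x ^ (s + j)))
              + x / 2 * ∑ j ∈ Finset.range (m - s + 1), ((2:ℝ) ^ j)⁻¹ *
                ∑ r ∈ Finset.range (min i j + 1), (b s i j r : ℝ) *
                  ((((i - r : ℕ) : ℝ) * llog x ^ (i - r - 1)
                      - ((s + j : ℕ) : ℝ) * llog x ^ (i - r)) /
                    (x * Real.log x ^ (s + j + 1)))) := by ring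
          _ = _ := by rw [hbl]; ring
      calc (-1:ℝ) ^ (s + 1) / (s : ℝ) * (∑ i ∈ Finset.range (s + 1), _)
            + x / 2 * ((-1) ^ (s + 1) / (s : ℝ) * ∑ i ∈ Finset.range (s + 1), _)
          = (-1) ^ (s + 1) / (s : ℝ) *
              ((∑ i ∈ Finset.range (s + 1), (a i s : ℝ) *
                ∑ j ∈ Finset.range (m - s + 1), ((2:ℝ) ^ j)⁻¹ *
                  ∑ r ∈ Finset.range (min i j + 1),
                    (b s i j r : ℝ) * (llog x ^ (i - r) / Real.log x ^ (s + j)))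
              + x / 2 * ∑ i ∈ Finset.range (s + 1), (a i s : ℝ) *
                  ∑ j ∈ Finset.range (m - s + 1), ((2:ℝ) ^ j)⁻¹ *
                    ∑ r ∈ Finset.range (min i j + 1), (b s i j r : ℝ) *
                      ((((i - r : ℕ) : ℝ) * llog x ^ (i - r - 1)
                          - ((s + j : ℕ) : ℝ) * llog x ^ (i - r)) /
                        (x * Real.log x ^ (s + j + 1)))) := by ring
        _ = (-1) ^ (s + 1) / (s : ℝ) *
              ∑ i ∈ Finset.range (s + 1),
                ((a i s : ℝ) * (llog x ^ i / Real.log x ^ s)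
                  - (a i s : ℝ) *
                    (((2:ℝ) ^ (m - s + 1) * Real.log x ^ (s + (m - s + 1)))⁻¹ *
                      ∑ r ∈ Finset.range (min i (m - s + 1) + 1),
                        (b s i (m - s + 1) r : ℝ) * llog x ^ (i - r))) := by
            rw [Finset.mul_sum, ← Finset.sum_add_distrib, Finset.sum_congr rfl step]
        _ = _ := by rw [Finset.sum_sub_distrib]; ring
    simp only [Hm, DH, Gm, Em]
    linear_combination hA - hB + hC
  have hFf : Ff m a x = x * Gm m a x := by rw [Ff, Gf_eq_Gm]
  rw [hFf, Ef]
  calc x * Hm m a b x + x ^ 2 / 2 * DH m a b x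
      = x * (Hm m a b x + x / 2 * DH m a b x) := by ring
    _ = x * (Gm m a x + Em m a b x) := by rw [main]
    _ = x * Gm m a x + x * Em m a b x := by ring

end

section Bounds

variable {m : ℕ} {a : ℕ → ℕ → ℚ} {b : ℕ → ℕ → ℕ → ℕ → ℤ}

/-- constant for the Em bound -/
noncomputable def CB (m : ℕ) (a : ℕ → ℕ → ℚ) (b : ℕ → ℕ → ℕ → ℕ → ℤ) : ℝ :=
  (Nat.factorial m : ℝ) + ∑ s ∈ Finset.Icc 1 m, ∑ i ∈ Finset.range (s + 1),
    |(a i s : ℝ)| * ∑ r ∈ Finset.range (min i (m - s + 1) + 1), |(b s i (m - s + 1) r : ℝ)|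

/-- constant for the derivative bound -/
noncomputable def CA (m : ℕ) (a : ℕ → ℕ → ℚ) : ℝ :=
  3 + ∑ s ∈ Finset.Icc 1 m, ∑ i ∈ Finset.range (s + 1), |(a i s : ℝ)| * (2 * (m : ℝ) + 1)

lemma Em_bound {x : ℝ} (hl1 : 1 ≤ Real.log x) (hy1 : 1 ≤ llog x) :
    |Em m a b x| ≤ CB m a b * (llog x ^ (m + 1) / Real.log x ^ (m + 1)) := by
  have hl0 : (0:ℝ) < Real.log x := lt_of_lt_of_le one_pos hl1
  have hy0 : (0:ℝ) < llog x := lt_of_lt_of_le one_pos hy1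
  have hQ1 : (Real.log x ^ (m + 1))⁻¹ ≤ llog x ^ (m + 1) / Real.log x ^ (m + 1) := by
    rw [div_eq_mul_inv]
    nth_rewrite 1 [← one_mul (Real.log x ^ (m + 1))⁻¹]
    exact mul_le_mul_of_nonneg_right (one_le_pow₀ hy1) (by positivity)
  have hT1 : (Nat.factorial m : ℝ) * ((2:ℝ) ^ (m + 1))⁻¹ * (Real.log x ^ (m + 1))⁻¹
      ≤ (Nat.factorial m : ℝ) * (llog x ^ (m + 1) / Real.log x ^ (m + 1)) := by
    have h2 : (Nat.factorial m : ℝ) * ((2:ℝ) ^ (m + 1))⁻¹ ≤ (Nat.factorial m : ℝ) := by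
      have := mul_le_mul_of_nonneg_left
        (inv_le_one_of_one_le₀ (one_le_pow₀ (one_le_two (α := ℝ)) (n := m + 1)))
        (by positivity : (0:ℝ) ≤ (Nat.factorial m : ℝ))
      simpa using this
    exact mul_le_mul h2 hQ1 (by positivity) (by positivity)
  have hS : ∀ s ∈ Finset.Icc 1 m,
      |(-1:ℝ) ^ (s + 1) / (s : ℝ) *
        ∑ i ∈ Finset.range (s + 1), (a i s : ℝ) *
          (((2:ℝ) ^ (m - s + 1) * Real.log x ^ (s + (m - s + 1)))⁻¹ *
            ∑ r ∈ Finset.range (min i (m - s + 1) + 1),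
              (b s i (m - s + 1) r : ℝ) * llog x ^ (i - r))|
      ≤ (∑ i ∈ Finset.range (s + 1), |(a i s : ℝ)| *
          ∑ r ∈ Finset.range (min i (m - s + 1) + 1), |(b s i (m - s + 1) r : ℝ)|) *
        (llog x ^ (m + 1) / Real.log x ^ (m + 1)) := by
    intro s hs
    obtain ⟨hs1, hs2⟩ := Finset.mem_Icc.mp hs
    have hexp : s + (m - s + 1) = m + 1 := by omega
    have hK : |(-1:ℝ) ^ (s + 1) / (s : ℝ)| ≤ 1 := by
      rw [abs_div, abs_pow, abs_neg, abs_one, one_pow, Nat.abs_cast,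
        div_le_one (by exact_mod_cast hs1)]
      exact_mod_cast hs1
    rw [abs_mul]
    have htri : |∑ i ∈ Finset.range (s + 1), (a i s : ℝ) *
          (((2:ℝ) ^ (m - s + 1) * Real.log x ^ (s + (m - s + 1)))⁻¹ *
            ∑ r ∈ Finset.range (min i (m - s + 1) + 1),
              (b s i (m - s + 1) r : ℝ) * llog x ^ (i - r))|
        ≤ ∑ i ∈ Finset.range (s + 1), |(a i s : ℝ)| *
            ((∑ r ∈ Finset.range (min i (m - s + 1) + 1), |(b s i (m - s + 1) r : ℝ)|) *
              (llog x ^ (m + 1) / Real.log x ^ (m + 1))) := by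
      refine (Finset.abs_sum_le_sum_abs _ _).trans (Finset.sum_le_sum fun i hi => ?_)
      have hi' : i ≤ s := by have := Finset.mem_range.mp hi; omega
      rw [abs_mul]
      refine mul_le_mul_of_nonneg_left ?_ (abs_nonneg _)
      rw [abs_mul]
      have hinv : |((2:ℝ) ^ (m - s + 1) * Real.log x ^ (s + (m - s + 1)))⁻¹|
          ≤ (Real.log x ^ (m + 1))⁻¹ := by
        rw [abs_inv]
        refine inv_anti₀ (by positivity) ?_
        rw [abs_of_pos (by positivity), hexp]
        nth_rewrite 1 [← one_mul (Real.log x ^ (m + 1))]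
        exact mul_le_mul_of_nonneg_right (one_le_pow₀ one_le_two)
          (by positivity)
      have hsum : |∑ r ∈ Finset.range (min i (m - s + 1) + 1),
            (b s i (m - s + 1) r : ℝ) * llog x ^ (i - r)|
          ≤ ∑ r ∈ Finset.range (min i (m - s + 1) + 1),
            |(b s i (m - s + 1) r : ℝ)| * llog x ^ (m + 1) := by
        refine (Finset.abs_sum_le_sum_abs _ _).trans (Finset.sum_le_sum fun r _ => ?_)
        rw [abs_mul, abs_pow, abs_of_pos hy0]
        exact mul_le_mul_of_nonneg_left (pow_le_pow_right₀ hy1 (by omega)) (abs_nonneg _)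
      calc |((2:ℝ) ^ (m - s + 1) * Real.log x ^ (s + (m - s + 1)))⁻¹| *
            |∑ r ∈ Finset.range (min i (m - s + 1) + 1),
              (b s i (m - s + 1) r : ℝ) * llog x ^ (i - r)|
          ≤ (Real.log x ^ (m + 1))⁻¹ *
            ∑ r ∈ Finset.range (min i (m - s + 1) + 1),
              |(b s i (m - s + 1) r : ℝ)| * llog x ^ (m + 1) :=
            mul_le_mul hinv hsum (abs_nonneg _) (by positivity)
        _ = (∑ r ∈ Finset.range (min i (m - s + 1) + 1), |(b s i (m - s + 1) r : ℝ)|) *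
              (llog x ^ (m + 1) / Real.log x ^ (m + 1)) := by
            rw [← Finset.sum_mul]
            ring
    calc |(-1:ℝ) ^ (s + 1) / (s : ℝ)| * |∑ i ∈ Finset.range (s + 1), (a i s : ℝ) *
          (((2:ℝ) ^ (m - s + 1) * Real.log x ^ (s + (m - s + 1)))⁻¹ *
            ∑ r ∈ Finset.range (min i (m - s + 1) + 1),
              (b s i (m - s + 1) r : ℝ) * llog x ^ (i - r))|
        ≤ 1 * ∑ i ∈ Finset.range (s + 1), |(a i s : ℝ)| *
            ((∑ r ∈ Finset.range (min i (m - s + 1) + 1), |(b s i (m - s + 1) r : ℝ)|) *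
              (llog x ^ (m + 1) / Real.log x ^ (m + 1))) :=
          mul_le_mul hK htri (abs_nonneg _) one_pos.le
      _ = (∑ i ∈ Finset.range (s + 1), |(a i s : ℝ)| *
            ∑ r ∈ Finset.range (min i (m - s + 1) + 1), |(b s i (m - s + 1) r : ℝ)|) *
          (llog x ^ (m + 1) / Real.log x ^ (m + 1)) := by
          rw [one_mul,
            show (∑ i ∈ Finset.range (s + 1), |(a i s : ℝ)| *
                ((∑ r ∈ Finset.range (min i (m - s + 1) + 1), |(b s i (m - s + 1) r : ℝ)|) *
                  (llog x ^ (m + 1) / Real.log x ^ (m + 1))))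
              = ∑ i ∈ Finset.range (s + 1), (|(a i s : ℝ)| *
                ∑ r ∈ Finset.range (min i (m - s + 1) + 1), |(b s i (m - s + 1) r : ℝ)|) *
                  (llog x ^ (m + 1) / Real.log x ^ (m + 1))
              from Finset.sum_congr rfl fun i _ => by ring, ← Finset.sum_mul]
  have htri0 : |Em m a b x|
      ≤ (Nat.factorial m : ℝ) * ((2:ℝ) ^ (m + 1))⁻¹ * (Real.log x ^ (m + 1))⁻¹ +
        |∑ s ∈ Finset.Icc 1 m, (-1:ℝ) ^ (s + 1) / (s : ℝ) *
          ∑ i ∈ Finset.range (s + 1), (a i s : ℝ) *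
            (((2:ℝ) ^ (m - s + 1) * Real.log x ^ (s + (m - s + 1)))⁻¹ *
              ∑ r ∈ Finset.range (min i (m - s + 1) + 1),
                (b s i (m - s + 1) r : ℝ) * llog x ^ (i - r))| := by
    rw [Em, sub_eq_add_neg]
    refine (abs_add_le _ _).trans ?_
    rw [abs_neg]
    exact add_le_add (le_of_eq (abs_of_nonneg (by positivity))) le_rfl
  calc |Em m a b x|
      ≤ (Nat.factorial m : ℝ) * ((2:ℝ) ^ (m + 1))⁻¹ * (Real.log x ^ (m + 1))⁻¹ +
        |∑ s ∈ Finset.Icc 1 m, (-1:ℝ) ^ (s + 1) / (s : ℝ) *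
          ∑ i ∈ Finset.range (s + 1), (a i s : ℝ) *
            (((2:ℝ) ^ (m - s + 1) * Real.log x ^ (s + (m - s + 1)))⁻¹ *
              ∑ r ∈ Finset.range (min i (m - s + 1) + 1),
                (b s i (m - s + 1) r : ℝ) * llog x ^ (i - r))| := htri0
    _ ≤ (Nat.factorial m : ℝ) * (llog x ^ (m + 1) / Real.log x ^ (m + 1)) +
        ∑ s ∈ Finset.Icc 1 m,
          (∑ i ∈ Finset.range (s + 1), |(a i s : ℝ)| *
            ∑ r ∈ Finset.range (min i (m - s + 1) + 1), |(b s i (m - s + 1) r : ℝ)|) *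
          (llog x ^ (m + 1) / Real.log x ^ (m + 1)) :=
        add_le_add hT1 ((Finset.abs_sum_le_sum_abs _ _).trans (Finset.sum_le_sum hS))
    _ = CB m a b * (llog x ^ (m + 1) / Real.log x ^ (m + 1)) := by
        rw [CB, add_mul, ← Finset.sum_mul]

lemma xpull {x : ℝ} (hx : x ≠ 0) (c A B : ℝ) : x * (c * (A / (x * B))) = c * (A / B) := by
  rcases eq_or_ne B 0 with hB | hB
  · simp [hB]
  · field_simp

lemma xDG {x : ℝ} (hx : x ≠ 0) :
    x * DG m a x = 1 + (Real.log x)⁻¹ +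
      ∑ s ∈ Finset.Icc 1 m, (-1) ^ (s + 1) / (s : ℝ) *
        ∑ i ∈ Finset.range (s + 1), (a i s : ℝ) *
          (((i : ℝ) * llog x ^ (i - 1) - (s : ℝ) * llog x ^ i) / Real.log x ^ (s + 1)) := by
  rw [DG, mul_add, mul_add, mul_inv_cancel₀ hx]
  congr 1
  · congr 1
    rw [mul_inv]
    linear_combination (Real.log x)⁻¹ * mul_inv_cancel₀ hx
  · rw [Finset.mul_sum]
    refine Finset.sum_congr rfl fun s _ => ?_
    rw [mul_left_comm, Finset.mul_sum]
    congr 1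
    exact Finset.sum_congr rfl fun i _ => xpull hx _ _ _

lemma DF_bound {x : ℝ} (hx1 : 1 ≤ x) (hl1 : 1 ≤ Real.log x) (hy1 : 1 ≤ llog x)
    (hyl : llog x ≤ Real.log x) :
    |Gm m a x + x * DG m a x| ≤ CA m a * (Real.log x * llog x ^ m) := by
  have hx : x ≠ 0 := (one_pos.trans_le hx1).ne'
  have hl0 : (0:ℝ) < Real.log x := lt_of_lt_of_le one_pos hl1
  have hy0 : (0:ℝ) < llog x := lt_of_lt_of_le one_pos hy1
  set P := Real.log x * llog x ^ m with hP
  have hym : llog x ^ m ≤ P := by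
    nth_rewrite 1 [← one_mul (llog x ^ m)]
    exact mul_le_mul_of_nonneg_right hl1 (by positivity)
  have hP1 : 1 ≤ P := le_trans (one_le_pow₀ hy1) hym
  have hP0 : (0:ℝ) < P := lt_of_lt_of_le one_pos hP1
  have h1 : |Real.log x| ≤ P := by
    rw [abs_of_pos hl0]
    nth_rewrite 1 [← mul_one (Real.log x)]
    exact mul_le_mul_of_nonneg_left (one_le_pow₀ hy1) hl0.le
  have h2 : |llog x| ≤ P := by
    rw [abs_of_pos hy0]
    refine le_trans hyl ?_
    rw [abs_of_pos hl0] at h1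
    exact h1
  have h3 : |(Real.log x)⁻¹| ≤ P := by
    rw [abs_of_pos (inv_pos.mpr hl0)]
    exact le_trans (inv_le_one_of_one_le₀ hl1) hP1
  have h4 : |∑ s ∈ Finset.Icc 1 m, (-1:ℝ) ^ (s + 1) / (s : ℝ) *
        ∑ i ∈ Finset.range (s + 1), (a i s : ℝ) * (llog x ^ i / Real.log x ^ s)|
      ≤ ∑ s ∈ Finset.Icc 1 m, ∑ i ∈ Finset.range (s + 1), |(a i s : ℝ)| * P := by
    refine (Finset.abs_sum_le_sum_abs _ _).trans (Finset.sum_le_sum fun s hs => ?_)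
    obtain ⟨hs1, hs2⟩ := Finset.mem_Icc.mp hs
    have hK : |(-1:ℝ) ^ (s + 1) / (s : ℝ)| ≤ 1 := by
      rw [abs_div, abs_pow, abs_neg, abs_one, one_pow, Nat.abs_cast,
        div_le_one (by exact_mod_cast hs1)]
      exact_mod_cast hs1
    rw [abs_mul]
    calc |(-1:ℝ) ^ (s + 1) / (s : ℝ)| *
          |∑ i ∈ Finset.range (s + 1), (a i s : ℝ) * (llog x ^ i / Real.log x ^ s)|
        ≤ 1 * ∑ i ∈ Finset.range (s + 1), |(a i s : ℝ)| * P := by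
          refine mul_le_mul hK ((Finset.abs_sum_le_sum_abs _ _).trans
            (Finset.sum_le_sum fun i hi => ?_)) (abs_nonneg _) one_pos.le
          have hi' : i ≤ s := by have := Finset.mem_range.mp hi; omega
          rw [abs_mul]
          refine mul_le_mul_of_nonneg_left ?_ (abs_nonneg _)
          rw [abs_div, abs_pow, abs_pow, abs_of_pos hy0, abs_of_pos hl0]
          calc llog x ^ i / Real.log x ^ s ≤ llog x ^ i :=
                div_le_self (by positivity) (one_le_pow₀ hl1)
            _ ≤ llog x ^ m := pow_le_pow_right₀ hy1 (by omega)
            _ ≤ P := hym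
      _ = ∑ i ∈ Finset.range (s + 1), |(a i s : ℝ)| * P := one_mul _
  have h5 : |∑ s ∈ Finset.Icc 1 m, (-1:ℝ) ^ (s + 1) / (s : ℝ) *
        ∑ i ∈ Finset.range (s + 1), (a i s : ℝ) *
          (((i : ℝ) * llog x ^ (i - 1) - (s : ℝ) * llog x ^ i) / Real.log x ^ (s + 1))|
      ≤ ∑ s ∈ Finset.Icc 1 m, ∑ i ∈ Finset.range (s + 1),
          |(a i s : ℝ)| * (2 * (m : ℝ) * P) := by
    refine (Finset.abs_sum_le_sum_abs _ _).trans (Finset.sum_le_sum fun s hs => ?_)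
    obtain ⟨hs1, hs2⟩ := Finset.mem_Icc.mp hs
    have hK : |(-1:ℝ) ^ (s + 1) / (s : ℝ)| ≤ 1 := by
      rw [abs_div, abs_pow, abs_neg, abs_one, one_pow, Nat.abs_cast,
        div_le_one (by exact_mod_cast hs1)]
      exact_mod_cast hs1
    rw [abs_mul]
    calc |(-1:ℝ) ^ (s + 1) / (s : ℝ)| *
          |∑ i ∈ Finset.range (s + 1), (a i s : ℝ) *
            (((i : ℝ) * llog x ^ (i - 1) - (s : ℝ) * llog x ^ i) / Real.log x ^ (s + 1))|
        ≤ 1 * ∑ i ∈ Finset.range (s + 1), |(a i s : ℝ)| * (2 * (m : ℝ) * P) := by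
          refine mul_le_mul hK ((Finset.abs_sum_le_sum_abs _ _).trans
            (Finset.sum_le_sum fun i hi => ?_)) (abs_nonneg _) one_pos.le
          have hi' : i ≤ s := by have := Finset.mem_range.mp hi; omega
          rw [abs_mul]
          refine mul_le_mul_of_nonneg_left ?_ (abs_nonneg _)
          rw [abs_div]
          calc |(i : ℝ) * llog x ^ (i - 1) - (s : ℝ) * llog x ^ i| / |Real.log x ^ (s + 1)|
              ≤ |(i : ℝ) * llog x ^ (i - 1) - (s : ℝ) * llog x ^ i| := by
                refine div_le_self (abs_nonneg _) ?_
                rw [abs_of_pos (by positivity)]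
                exact one_le_pow₀ hl1
            _ ≤ |(i : ℝ) * llog x ^ (i - 1)| + |(s : ℝ) * llog x ^ i| := by
                rw [sub_eq_add_neg]
                exact (abs_add_le _ _).trans (by rw [abs_neg])
            _ = (i : ℝ) * llog x ^ (i - 1) + (s : ℝ) * llog x ^ i := by
                rw [abs_mul, abs_mul, abs_pow, abs_pow, abs_of_pos hy0, Nat.abs_cast,
                  Nat.abs_cast]
            _ ≤ (m : ℝ) * llog x ^ m + (m : ℝ) * llog x ^ m := by
                refine add_le_add (mul_le_mul ?_ ?_ (by positivity) (by positivity))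
                  (mul_le_mul ?_ ?_ (by positivity) (by positivity))
                · exact_mod_cast (by omega : i ≤ m)
                · exact pow_le_pow_right₀ hy1 (by omega)
                · exact_mod_cast (by omega : s ≤ m)
                · exact pow_le_pow_right₀ hy1 (by omega)
            _ = 2 * (m : ℝ) * llog x ^ m := by ring
            _ ≤ 2 * (m : ℝ) * P := by
                exact mul_le_mul_of_nonneg_left hym (by positivity)
      _ = ∑ i ∈ Finset.range (s + 1), |(a i s : ℝ)| * (2 * (m : ℝ) * P) := one_mul _
  rw [xDG hx, Gm]
  have e : (Real.log x + llog x - 1 +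
        ∑ s ∈ Finset.Icc 1 m, (-1:ℝ) ^ (s + 1) / (s : ℝ) *
          ∑ i ∈ Finset.range (s + 1), (a i s : ℝ) * (llog x ^ i / Real.log x ^ s))
      + (1 + (Real.log x)⁻¹ +
        ∑ s ∈ Finset.Icc 1 m, (-1:ℝ) ^ (s + 1) / (s : ℝ) *
          ∑ i ∈ Finset.range (s + 1), (a i s : ℝ) *
            (((i : ℝ) * llog x ^ (i - 1) - (s : ℝ) * llog x ^ i) / Real.log x ^ (s + 1)))
      = ((Real.log x + llog x) + (Real.log x)⁻¹)
        + ((∑ s ∈ Finset.Icc 1 m, (-1:ℝ) ^ (s + 1) / (s : ℝ) *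
            ∑ i ∈ Finset.range (s + 1), (a i s : ℝ) * (llog x ^ i / Real.log x ^ s))
          + ∑ s ∈ Finset.Icc 1 m, (-1:ℝ) ^ (s + 1) / (s : ℝ) *
            ∑ i ∈ Finset.range (s + 1), (a i s : ℝ) *
              (((i : ℝ) * llog x ^ (i - 1) - (s : ℝ) * llog x ^ i) / Real.log x ^ (s + 1)))
        := by ring
  rw [e]
  calc |((Real.log x + llog x) + (Real.log x)⁻¹) + _|
      ≤ (|Real.log x| + |llog x| + |(Real.log x)⁻¹|) +
        (|∑ s ∈ Finset.Icc 1 m, (-1:ℝ) ^ (s + 1) / (s : ℝ) *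
            ∑ i ∈ Finset.range (s + 1), (a i s : ℝ) * (llog x ^ i / Real.log x ^ s)|
          + |∑ s ∈ Finset.Icc 1 m, (-1:ℝ) ^ (s + 1) / (s : ℝ) *
            ∑ i ∈ Finset.range (s + 1), (a i s : ℝ) *
              (((i : ℝ) * llog x ^ (i - 1) - (s : ℝ) * llog x ^ i) / Real.log x ^ (s + 1))|)
        := (abs_add_le _ _).trans (add_le_add
            ((abs_add_le _ _).trans (add_le_add (abs_add_le _ _) le_rfl)) (abs_add_le _ _))
    _ ≤ (P + P + P) + ((∑ s ∈ Finset.Icc 1 m, ∑ i ∈ Finset.range (s + 1), |(a i s : ℝ)| * P)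
          + ∑ s ∈ Finset.Icc 1 m, ∑ i ∈ Finset.range (s + 1),
              |(a i s : ℝ)| * (2 * (m : ℝ) * P)) :=
        add_le_add (add_le_add (add_le_add h1 h2) h3) (add_le_add h4 h5)
    _ = CA m a * P := by
        rw [CA, add_mul]
        simp only [Finset.sum_mul]
        rw [← Finset.sum_add_distrib]
        rw [Finset.sum_congr rfl fun s _ => (Finset.sum_add_distrib).symm]
        rw [Finset.sum_congr rfl fun s _ => Finset.sum_congr rfl fun i _ =>
          (by ring : |(a i s : ℝ)| * P + |(a i s : ℝ)| * (2 * (m : ℝ) * P)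
            = |(a i s : ℝ)| * (2 * (m : ℝ) + 1) * P)]
        ring

end Bounds

section Endgame

variable {m : ℕ} {a : ℕ → ℕ → ℚ} {b : ℕ → ℕ → ℕ → ℕ → ℤ}

noncomputable def x₀ : ℝ := Real.exp (Real.exp 1)

lemma exp_one_ge : (2:ℝ) ≤ Real.exp 1 := by linarith [Real.add_one_le_exp (1:ℝ)]

lemma x₀_ge : (2:ℝ) ≤ x₀ := by
  unfold x₀
  calc (2:ℝ) ≤ Real.exp 1 := exp_one_ge
    _ ≤ Real.exp (Real.exp 1) := by
        rw [Real.exp_le_exp]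
        linarith [exp_one_ge]

lemma region {x : ℝ} (hx : x₀ ≤ x) :
    1 ≤ x ∧ 1 ≤ Real.log x ∧ 1 ≤ llog x ∧ llog x ≤ Real.log x := by
  have hx1 : 1 ≤ x := le_trans (by linarith [x₀_ge]) hx
  have hlx : Real.exp 1 ≤ Real.log x := by
    have := Real.log_le_log (Real.exp_pos _) hx
    unfold x₀ at this
    rwa [Real.log_exp] at this
  have hl1 : 1 ≤ Real.log x := le_trans (by linarith [exp_one_ge]) hlx
  have hy1 : 1 ≤ llog x := by
    rw [llog]
    have := Real.log_le_log (Real.exp_pos 1) hlx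
    rwa [Real.log_exp] at this
  have hyl : llog x ≤ Real.log x := Real.log_le_self (by linarith)
  exact ⟨hx1, hl1, hy1, hyl⟩

lemma Ef_bound {x : ℝ} (hx : x₀ ≤ x) : |Ef m a b x| ≤ CB m a b * cAux m x := by
  obtain ⟨hx1, hl1, hy1, hyl⟩ := region hx
  have h := Em_bound (m := m) (a := a) (b := b) hl1 hy1
  rw [Ef, abs_mul, abs_of_nonneg (by linarith : (0:ℝ) ≤ x)]
  calc x * |Em m a b x| ≤ x * (CB m a b * (llog x ^ (m + 1) / Real.log x ^ (m + 1))) :=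
      mul_le_mul_of_nonneg_left h (by linarith)
    _ = CB m a b * cAux m x := by
      rw [cAux]
      simp only [llog]
      ring

lemma CB_nonneg : 0 ≤ CB m a b := by
  rw [CB]
  positivity

lemma loglittle (k : ℕ) :
    (fun x : ℝ => Real.log x ^ (k + 1)) =o[atTop] fun x => Real.sqrt x := by
  have hr : (0:ℝ) < 1 / (2 * ((k:ℝ) + 1)) := by positivity
  have h := (isLittleO_log_rpow_atTop hr).pow (n := k + 1) (by omega)
  refine h.congr' EventuallyEq.rfl ?_
  filter_upwards [eventually_ge_atTop (0:ℝ)] with x hx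
  rw [← Real.rpow_natCast (x ^ (1 / (2 * ((k:ℝ) + 1)))) (k + 1), ← Real.rpow_mul hx,
    Real.sqrt_eq_rpow]
  congr 1
  push_cast
  field_simp

lemma ev_polylog (C : ℝ) (k : ℕ) : ∀ᶠ x : ℝ in atTop, C * Real.log x ^ k ≤ Real.sqrt x := by
  have hD : (0:ℝ) < max C 1 := lt_of_lt_of_le one_pos (le_max_right _ _)
  have h := (loglittle k).def (show (0:ℝ) < (max C 1)⁻¹ by positivity)
  filter_upwards [h, eventually_ge_atTop x₀] with x hx hx1
  obtain ⟨hx1', hl1, hy1, hyl⟩ := region hx1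
  have hs : (0:ℝ) ≤ Real.sqrt x := Real.sqrt_nonneg x
  rw [Real.norm_eq_abs, Real.norm_eq_abs, abs_of_nonneg (by positivity),
    abs_of_nonneg hs] at hx
  have step1 : C * Real.log x ^ k ≤ max C 1 * Real.log x ^ (k + 1) :=
    mul_le_mul (le_max_left _ _) (pow_le_pow_right₀ hl1 (Nat.le_succ k))
      (by positivity) hD.le
  have step2 : max C 1 * Real.log x ^ (k + 1) ≤ max C 1 * ((max C 1)⁻¹ * Real.sqrt x) :=
    mul_le_mul_of_nonneg_left hx hD.le
  have step3 : max C 1 * ((max C 1)⁻¹ * Real.sqrt x) = Real.sqrt x := by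
    rw [← mul_assoc, mul_inv_cancel₀ hD.ne', one_mul]
  linarith

lemma cAux_mono {x z : ℝ} (hz : x₀ ≤ Real.sqrt z) (h1 : Real.sqrt z ≤ x) (h2 : x ≤ z) :
    cAux m x ≤ 2 ^ (m + 1) * cAux m z := by
  have hzx : x₀ ≤ x := le_trans hz h1
  have hzz : x₀ ≤ z := le_trans hzx h2
  obtain ⟨hx1, hlx1, hyx1, _⟩ := region hzx
  obtain ⟨hz1, hlz1, hyz1, _⟩ := region hzz
  have hz0 : (0:ℝ) ≤ z := by linarith
  have hlsq : Real.log (Real.sqrt z) = Real.log z / 2 := Real.log_sqrt hz0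
  have hllog : Real.log z / 2 ≤ Real.log x := by
    rw [← hlsq]
    exact Real.log_le_log (lt_of_lt_of_le (by linarith [x₀_ge]) hz) h1
  have hyy : llog x ≤ llog z := by
    rw [llog, llog]
    exact Real.log_le_log (by linarith) (Real.log_le_log (by linarith) h2)
  have hnum : x * Real.log (Real.log x) ^ (m + 1) ≤ z * Real.log (Real.log z) ^ (m + 1) := by
    have h1' : (0:ℝ) ≤ Real.log (Real.log x) := by
      have := hyx1; rw [llog] at this; linarith
    refine mul_le_mul h2 (pow_le_pow_left₀ h1' ?_ _) (by positivity) hz0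
    have := hyy; rw [llog, llog] at this; exact this
  have hden : (Real.log z / 2) ^ (m + 1) ≤ Real.log x ^ (m + 1) :=
    pow_le_pow_left₀ (by linarith) hllog _
  calc cAux m x = x * Real.log (Real.log x) ^ (m + 1) / Real.log x ^ (m + 1) := rfl
    _ ≤ z * Real.log (Real.log z) ^ (m + 1) / (Real.log z / 2) ^ (m + 1) := by
        refine div_le_div₀ (by positivity) hnum (by positivity) hden
    _ = 2 ^ (m + 1) * cAux m z := by
        rw [cAux, div_pow]
        rw [div_div_eq_mul_div]
        ring
  -- positivity side conditions may need log z / 2 > 0: provided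
 
lemma cAux_le_self {x : ℝ} (hx : x₀ ≤ x) : cAux m x ≤ x := by
  obtain ⟨hx1, hl1, hy1, hyl⟩ := region hx
  rw [cAux]
  rw [div_le_iff₀ (by positivity)]
  have : Real.log (Real.log x) ^ (m + 1) ≤ Real.log x ^ (m + 1) := by
    refine pow_le_pow_left₀ ?_ ?_ _
    · have := hy1; rw [llog] at this; linarith
    · have := hyl; rw [llog] at this; exact this
  nlinarith [pow_pos (lt_of_lt_of_le one_pos hl1) (m + 1), this,
    (by linarith : (0:ℝ) < x)]

lemma sqrt_le_cAux {x : ℝ} (hx : x₀ ≤ x) (hsq : Real.log x ^ (m + 1) ≤ Real.sqrt x) :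
    Real.sqrt x ≤ cAux m x := by
  obtain ⟨hx1, hl1, hy1, hyl⟩ := region hx
  have hy1' : 1 ≤ Real.log (Real.log x) := by rw [llog] at hy1; exact hy1
  have hl0 : (0:ℝ) < Real.log x := lt_of_lt_of_le one_pos hl1
  have hsq0 : (0:ℝ) < Real.sqrt x := Real.sqrt_pos.mpr (by linarith)
  calc Real.sqrt x = x / Real.sqrt x := (Real.div_sqrt).symm
    _ ≤ x / Real.log x ^ (m + 1) := by
        refine div_le_div_of_nonneg_left (by linarith) (by positivity) hsq
    _ ≤ x * Real.log (Real.log x) ^ (m + 1) / Real.log x ^ (m + 1) := by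
        refine div_le_div_of_nonneg_right ?_ (by positivity)
        nth_rewrite 1 [← mul_one x]
        exact mul_le_mul_of_nonneg_left (one_le_pow₀ hy1') (by linarith)
    _ = cAux m x := rfl

lemma one_le_cAux {x : ℝ} (hx : x₀ ≤ x) (hsq : Real.log x ^ (m + 1) ≤ Real.sqrt x) :
    1 ≤ cAux m x := by
  refine le_trans ?_ (sqrt_le_cAux hx hsq)
  rw [Real.one_le_sqrt]
  exact le_trans (by linarith [x₀_ge]) hx


lemma CA_nonneg : 0 ≤ CA m a := by
  rw [CA]
  have h : ∀ s ∈ Finset.Icc 1 m, (0:ℝ) ≤ ∑ i ∈ Finset.range (s + 1),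
      |(a i s : ℝ)| * (2 * (m : ℝ) + 1) :=
    fun s _ => Finset.sum_nonneg fun i _ => by positivity
  have h2 := Finset.sum_nonneg h
  linarith

lemma sqrt_le_sub_one {x : ℝ} (hx : 4 ≤ x) : Real.sqrt x ≤ x - 1 := by
  have h := Real.sqrt_le_sqrt (show x ≤ (x - 1) ^ 2 by nlinarith)
  rwa [Real.sqrt_sq (by linarith)] at h

lemma x₀_le_sqrt {z : ℝ} (hz : x₀ ^ 2 ≤ z) : x₀ ≤ Real.sqrt z := by
  have h := Real.sqrt_le_sqrt hz
  rwa [Real.sqrt_sq (by linarith [x₀_ge])] at h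

end Endgame


end SP

set_option maxHeartbeats 1000000 in
/-- Main theorem: for coefficients `a` satisfying the prime asymptotic hypothesis (210),
`∑_{k ≤ n} p_k = (n²/2)(g(n) - h_m(n)
  + ∑_{s=1}^m ((-1)^{s+1}/(s log^s n)) ∑_{i=0}^s a_{is} ∑_{j=0}^{m-s} ∑_{r=0}^{min(i,j)}
      b_{s,i,j,r} (log log n)^{i-r} / (2^j log^j n)) + O(n c_m(n))`. -/
theorem sum_primes_general_asymptotic (m : ℕ) (hm : 1 ≤ m) (a : ℕ → ℕ → ℚ)
    (ha : ∀ s : ℕ, 1 ≤ s → s ≤ m → a s s = 1) (hyp : PrimeHyp m a)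
    (b : ℕ → ℕ → ℕ → ℕ → ℤ) (hb : BRec b) :
    (fun n : ℕ =>
        (∑ k ∈ Finset.Icc 1 n, (nthPrime k : ℝ)) -
          (n : ℝ) ^ 2 / 2 *
            (gAux n - hAux m n +
              ∑ s ∈ Finset.Icc 1 m, (-1) ^ (s + 1) / ((s : ℝ) * Real.log n ^ s) *
                ∑ i ∈ Finset.range (s + 1), (a i s : ℝ) *
                  ∑ j ∈ Finset.range (m - s + 1), ∑ r ∈ Finset.range (min i j + 1),
                    (b s i j r : ℝ) * Real.log (Real.log n) ^ (i - r) /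
                      (2 ^ j * Real.log n ^ j)))
      =O[atTop] fun n : ℕ => (n : ℝ) * cAux m n := by
  classical
  set S : ℕ → ℝ := fun n => ∑ k ∈ Finset.Icc 1 n, (nthPrime k : ℝ) with hSdef
  set T : ℝ → ℝ := SP.Tf m a b with hTdef
  rw [PrimeHyp, Asymptotics.isBigO_iff] at hyp
  obtain ⟨c₀, hc₀⟩ := hyp
  have hc₀' : ∀ᶠ (n : ℕ) in atTop, |(nthPrime n : ℝ) - SP.Ff m a n| ≤ |c₀| * |cAux m n| := by
    filter_upwards [hc₀] with n hn
    rw [Real.norm_eq_abs, Real.norm_eq_abs] at hn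
    have he : SP.Ff m a (n : ℝ) = (n : ℝ) *
        (Real.log n + Real.log (Real.log n) - 1 +
          ∑ s ∈ Finset.Icc 1 m, (-1) ^ (s + 1) / ((s : ℝ) * Real.log n ^ s) *
            ∑ i ∈ Finset.range (s + 1), (a i s : ℝ) * Real.log (Real.log n) ^ i) := by
      simp only [SP.Ff, SP.Gf, SP.llog]
    rw [he]
    exact hn.trans (mul_le_mul_of_nonneg_right (le_abs_self _) (abs_nonneg _))
  obtain ⟨N₀, hN₀⟩ := eventually_atTop.mp hc₀'
  obtain ⟨X₁, hX₁⟩ := eventually_atTop.mp (SP.ev_polylog (SP.CA m a) (m + 1))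
  obtain ⟨X₂, hX₂⟩ := eventually_atTop.mp (SP.ev_polylog 1 (m + 1))
  set X : ℝ := max (max X₁ X₂) (max (SP.x₀ ^ 2) 4) with hXdef
  obtain ⟨N₁, hN₁⟩ := exists_nat_ge (X + 2)
  set N : ℕ := max N₁ N₀ with hNdef
  have hNX : X + 2 ≤ (N : ℝ) := le_trans hN₁ (by exact_mod_cast Nat.cast_le.mpr (le_max_left _ _))
  have hNN₀ : N₀ ≤ N := le_max_right _ _
  have hX₁X : X₁ ≤ X := le_trans (le_max_left _ _) (le_max_left _ _)
  have hX₂X : X₂ ≤ X := le_trans (le_max_right _ _) (le_max_left _ _)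
  have hx₀sqX : SP.x₀ ^ 2 ≤ X := le_trans (le_max_left _ _) (le_max_right _ _)
  have h4X : (4:ℝ) ≤ X := le_trans (le_max_right _ _) (le_max_right _ _)
  have hx₀X : SP.x₀ ≤ X := le_trans (by nlinarith [SP.x₀_ge]) hx₀sqX
  set C₁ : ℝ := |c₀| + SP.CB m a b * 2 ^ (m + 1) with hC₁def
  have hC₁0 : 0 ≤ C₁ := by
    have := SP.CB_nonneg (m := m) (a := a) (b := b)
    positivity
  have step : ∀ k : ℕ, N + 1 ≤ k →
      |(nthPrime k : ℝ) - (T k - T ((k : ℝ) - 1))|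
        ≤ C₁ * cAux m k + Real.sqrt k := by
    intro k hk
    have hkR : (N : ℝ) + 1 ≤ (k : ℝ) := by exact_mod_cast hk
    have hk1X : X + 1 ≤ (k : ℝ) - 1 := by linarith
    have hreg : ∀ t : ℝ, (k : ℝ) - 1 ≤ t → SP.x₀ ≤ t := fun t ht => by linarith [hx₀X]
    have hne : ∀ t : ℝ, (k : ℝ) - 1 ≤ t → t ≠ 0 ∧ Real.log t ≠ 0 := by
      intro t ht
      obtain ⟨h1, h2, _, _⟩ := SP.region (hreg t ht)
      constructor
      · intro h; rw [h] at h1; linarith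
      · intro h; rw [h] at h2; linarith
    have hcont : ContinuousOn T (Set.Icc ((k : ℝ) - 1) k) := by
      intro t ht
      obtain ⟨ht1, ht2⟩ := hne t ht.1
      exact (SP.hasDerivAt_Tf ht1 ht2).continuousAt.continuousWithinAt
    have hderiv : ∀ t ∈ Set.Ioo ((k : ℝ) - 1) (k : ℝ),
        HasDerivAt T (t * SP.Hm m a b t + t ^ 2 / 2 * SP.DH m a b t) t := by
      intro t ht
      obtain ⟨ht1, ht2⟩ := hne t ht.1.le
      exact SP.hasDerivAt_Tf ht1 ht2
    obtain ⟨ξ, hξmem, hξ⟩ := exists_hasDerivAt_eq_slope T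
      (fun t => t * SP.Hm m a b t + t ^ 2 / 2 * SP.DH m a b t)
      (by linarith : (k : ℝ) - 1 < k) hcont hderiv
    have hTstep : T (k : ℝ) - T ((k : ℝ) - 1) = SP.Ff m a ξ + SP.Ef m a b ξ := by
      have h1 : (k : ℝ) - ((k : ℝ) - 1) = 1 := by ring
      rw [h1, div_one] at hξ
      rw [← hξ]
      exact SP.key_ident hb (hne ξ hξmem.1.le).1
    have hcontF : ContinuousOn (SP.Ff m a) (Set.Icc ξ (k : ℝ)) := by
      intro t ht
      obtain ⟨ht1, ht2⟩ := hne t (le_trans hξmem.1.le ht.1)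
      exact (SP.hasDerivAt_Ff ht1 ht2).continuousAt.continuousWithinAt
    have hderivF : ∀ t ∈ Set.Ioo ξ (k : ℝ),
        HasDerivAt (SP.Ff m a) (SP.Gm m a t + t * SP.DG m a t) t := by
      intro t ht
      obtain ⟨ht1, ht2⟩ := hne t (le_trans hξmem.1.le ht.1.le)
      exact SP.hasDerivAt_Ff ht1 ht2
    obtain ⟨η, hηmem, hη⟩ := exists_hasDerivAt_eq_slope (SP.Ff m a)
      (fun t => SP.Gm m a t + t * SP.DG m a t) hξmem.2 hcontF hderivF
    have hFdiff : |SP.Ff m a k - SP.Ff m a ξ| ≤ Real.sqrt k := by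
      have hd : SP.Ff m a k - SP.Ff m a ξ
          = (SP.Gm m a η + η * SP.DG m a η) * ((k : ℝ) - ξ) := by
        rw [hη]
        rw [div_mul_cancel₀ _ (sub_ne_zero.mpr (ne_of_gt hξmem.2))]
      rw [hd, abs_mul]
      have hη1 : (k : ℝ) - 1 ≤ η := le_trans hξmem.1.le hηmem.1.le
      obtain ⟨hr1, hr2, hr3, hr4⟩ := SP.region (hreg η hη1)
      have hDF := SP.DF_bound (m := m) (a := a) hr1 hr2 hr3 hr4
      have hyleq : SP.llog η ^ m ≤ Real.log η ^ m :=
        pow_le_pow_left₀ (by linarith) hr4 m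
      have hpoly : SP.CA m a * Real.log η ^ (m + 1) ≤ Real.sqrt η :=
        hX₁ η (by linarith [hX₁X])
      have habs : |SP.Gm m a η + η * SP.DG m a η| ≤ Real.sqrt k := by
        refine le_trans hDF (le_trans ?_ (le_trans hpoly
          (Real.sqrt_le_sqrt (by linarith [hηmem.2, hξmem.2] : η ≤ (k : ℝ)))))
        calc SP.CA m a * (Real.log η * SP.llog η ^ m)
            ≤ SP.CA m a * (Real.log η * Real.log η ^ m) := by
              refine mul_le_mul_of_nonneg_left
                (mul_le_mul_of_nonneg_left hyleq (by linarith)) SP.CA_nonneg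
          _ = SP.CA m a * Real.log η ^ (m + 1) := by ring
      have hxk : |(k : ℝ) - ξ| ≤ 1 := by
        rw [abs_of_nonneg (by linarith [hξmem.2] : (0:ℝ) ≤ (k : ℝ) - ξ)]
        linarith [hξmem.1]
      calc |SP.Gm m a η + η * SP.DG m a η| * |(k : ℝ) - ξ|
          ≤ Real.sqrt k * 1 := mul_le_mul habs hxk (abs_nonneg _) (Real.sqrt_nonneg _)
        _ = Real.sqrt k := mul_one _
    have hsqkx₀ : SP.x₀ ≤ Real.sqrt k := SP.x₀_le_sqrt (by linarith [hx₀sqX])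
    have hsqk : Real.sqrt k ≤ ξ := by
      refine le_trans (SP.sqrt_le_sub_one (by linarith [h4X] : (4:ℝ) ≤ (k:ℝ))) ?_
      linarith [hξmem.1]
    have hEf : |SP.Ef m a b ξ| ≤ SP.CB m a b * (2 ^ (m + 1) * cAux m k) := by
      refine le_trans (SP.Ef_bound (le_trans hsqkx₀ hsqk)) ?_
      exact mul_le_mul_of_nonneg_left
        (SP.cAux_mono hsqkx₀ hsqk hξmem.2.le) SP.CB_nonneg
    have hhyp : |(nthPrime k : ℝ) - SP.Ff m a k| ≤ |c₀| * cAux m k := by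
      have h := hN₀ k (by omega)
      have hpos : (0:ℝ) ≤ cAux m k :=
        le_trans zero_le_one (SP.one_le_cAux (hreg k (by linarith))
          (by have := hX₂ k (by linarith [hX₂X]); rwa [one_mul] at this))
      rwa [abs_of_nonneg hpos] at h
    have hdecomp : (nthPrime k : ℝ) - (T (k : ℝ) - T ((k : ℝ) - 1))
        = ((nthPrime k : ℝ) - SP.Ff m a k) + (SP.Ff m a k - SP.Ff m a ξ)
          + (- SP.Ef m a b ξ) := by
      rw [hTstep]; ring
    rw [hdecomp]
    have t1 := abs_add_le (((nthPrime k : ℝ) - SP.Ff m a k) + (SP.Ff m a k - SP.Ff m a ξ))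
      (- SP.Ef m a b ξ)
    have t2 := abs_add_le ((nthPrime k : ℝ) - SP.Ff m a k) (SP.Ff m a k - SP.Ff m a ξ)
    rw [abs_neg] at t1
    have : C₁ * cAux m k + Real.sqrt k
        = |c₀| * cAux m k + Real.sqrt k + SP.CB m a b * (2 ^ (m + 1) * cAux m k) := by
      rw [hC₁def]; ring
    rw [this]
    linarith [hhyp, hFdiff, hEf]
  have ind : ∀ n : ℕ, N ≤ n → |S n - T n| ≤ |S N - T N| +
      ∑ k ∈ Finset.Icc (N + 1) n, (C₁ * cAux m k + Real.sqrt k) := by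
    refine Nat.le_induction ?_ ?_
    · rw [Finset.Icc_eq_empty (by omega), Finset.sum_empty]
      simp
    · intro n hn ih
      have hS : S (n + 1) = S n + (nthPrime (n + 1) : ℝ) :=
        Finset.sum_Icc_succ_top (by omega) _
      have hsum : ∑ k ∈ Finset.Icc (N + 1) (n + 1), (C₁ * cAux m k + Real.sqrt k)
          = (∑ k ∈ Finset.Icc (N + 1) n, (C₁ * cAux m k + Real.sqrt k))
            + (C₁ * cAux m (n + 1 : ℕ) + Real.sqrt (n + 1 : ℕ)) :=
        Finset.sum_Icc_succ_top (by omega) _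
      have hstep := step (n + 1) (by omega)
      have hcast : ((n + 1 : ℕ) : ℝ) - 1 = (n : ℝ) := by push_cast; ring
      rw [hcast] at hstep
      have hdec : S (n + 1) - T ((n + 1 : ℕ) : ℝ)
          = (S n - T n) + ((nthPrime (n + 1) : ℝ)
            - (T ((n + 1 : ℕ) : ℝ) - T ((n : ℕ) : ℝ))) := by
        rw [hS]; ring
      rw [hdec, hsum]
      have htri := abs_add_le (S n - T n)
        ((nthPrime (n + 1) : ℝ) - (T ((n + 1 : ℕ) : ℝ) - T ((n : ℕ) : ℝ)))
      linarith [htri, ih, hstep]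
  rw [Asymptotics.isBigO_iff]
  refine ⟨|S N - T N| + C₁ * (2 ^ (m + 1) + 1) + 1, ?_⟩
  filter_upwards [eventually_ge_atTop (N + 1)] with n hn
  have hnR : (N : ℝ) + 1 ≤ (n : ℝ) := by exact_mod_cast hn
  have hnx₀ : SP.x₀ ≤ (n : ℝ) := by linarith [hx₀X]
  have hsqn : Real.log (n : ℝ) ^ (m + 1) ≤ Real.sqrt n := by
    have := hX₂ n (by linarith [hX₂X]); rwa [one_mul] at this
  have hc1 : 1 ≤ cAux m n := SP.one_le_cAux hnx₀ hsqn
  have hsc : Real.sqrt n ≤ cAux m n := SP.sqrt_le_cAux hnx₀ hsqn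
  have hn1 : (1:ℝ) ≤ (n : ℝ) := by linarith
  have hsqx₀ : SP.x₀ ≤ Real.sqrt n := SP.x₀_le_sqrt (by linarith [hx₀sqX])
  have hterm : ∀ k ∈ Finset.Icc (N + 1) n,
      C₁ * cAux m k + Real.sqrt k
        ≤ C₁ * (2 ^ (m + 1) * cAux m n + Real.sqrt n) + Real.sqrt n := by
    intro k hk
    obtain ⟨hk1, hk2⟩ := Finset.mem_Icc.mp hk
    have hkR : (N : ℝ) + 1 ≤ (k : ℝ) := by exact_mod_cast hk1
    have hkn : (k : ℝ) ≤ (n : ℝ) := by exact_mod_cast hk2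
    have hkx₀ : SP.x₀ ≤ (k : ℝ) := by linarith [hx₀X]
    have hck : cAux m k ≤ 2 ^ (m + 1) * cAux m n + Real.sqrt n := by
      rcases le_or_gt (Real.sqrt n) (k : ℝ) with h | h
      · refine le_trans (SP.cAux_mono hsqx₀ h hkn) ?_
        have h0 : (0:ℝ) ≤ Real.sqrt n := Real.sqrt_nonneg _
        linarith
      · refine le_trans (SP.cAux_le_self hkx₀) ?_
        have h2 : (0:ℝ) ≤ 2 ^ (m + 1) * cAux m n := by positivity
        linarith
    have hsk : Real.sqrt k ≤ Real.sqrt n := Real.sqrt_le_sqrt hkn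
    have := mul_le_mul_of_nonneg_left hck hC₁0
    linarith
  have hsumle : ∑ k ∈ Finset.Icc (N + 1) n, (C₁ * cAux m k + Real.sqrt k)
      ≤ (n : ℝ) * (C₁ * (2 ^ (m + 1) * cAux m n + Real.sqrt n) + Real.sqrt n) := by
    refine le_trans (Finset.sum_le_card_nsmul _ _ _ hterm) ?_
    rw [nsmul_eq_mul]
    refine mul_le_mul_of_nonneg_right ?_ ?_
    · rw [Nat.card_Icc]
      have h3 : (n + 1 - (N + 1) : ℕ) ≤ n := by omega
      exact_mod_cast h3
    · have h1 : (0:ℝ) ≤ Real.sqrt n := Real.sqrt_nonneg _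
      have h2 : (0:ℝ) ≤ cAux m n := by linarith
      positivity
  have hmain := ind n (by omega)
  have hfinal : |S n - T n|
      ≤ (|S N - T N| + C₁ * (2 ^ (m + 1) + 1) + 1) * ((n : ℝ) * cAux m n) := by
    have hβ : C₁ * (2 ^ (m + 1) * cAux m n + Real.sqrt n) + Real.sqrt n
        ≤ (C₁ * (2 ^ (m + 1) + 1) + 1) * cAux m n := by
      have h1 := mul_le_mul_of_nonneg_left hsc hC₁0
      nlinarith
    have hγ : (n : ℝ) * (C₁ * (2 ^ (m + 1) * cAux m n + Real.sqrt n) + Real.sqrt n)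
        ≤ (C₁ * (2 ^ (m + 1) + 1) + 1) * ((n : ℝ) * cAux m n) := by
      calc (n : ℝ) * (C₁ * (2 ^ (m + 1) * cAux m n + Real.sqrt n) + Real.sqrt n)
          ≤ (n : ℝ) * ((C₁ * (2 ^ (m + 1) + 1) + 1) * cAux m n) :=
            mul_le_mul_of_nonneg_left hβ (by linarith)
        _ = (C₁ * (2 ^ (m + 1) + 1) + 1) * ((n : ℝ) * cAux m n) := by ring
    have hD₀ : |S N - T N| ≤ |S N - T N| * ((n : ℝ) * cAux m n) := by
      nth_rewrite 1 [← mul_one |S N - T N|]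
      refine mul_le_mul_of_nonneg_left ?_ (abs_nonneg _)
      nlinarith
    calc |S n - T n| ≤ |S N - T N| +
        ∑ k ∈ Finset.Icc (N + 1) n, (C₁ * cAux m k + Real.sqrt k) := hmain
      _ ≤ |S N - T N| * ((n : ℝ) * cAux m n)
          + (C₁ * (2 ^ (m + 1) + 1) + 1) * ((n : ℝ) * cAux m n) := by
          linarith [hsumle, hγ, hD₀]
      _ = (|S N - T N| + C₁ * (2 ^ (m + 1) + 1) + 1) * ((n : ℝ) * cAux m n) := by ring
  have hTn : ((n:ℝ)) ^ 2 / 2 *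
      (gAux n - hAux m n +
        ∑ s ∈ Finset.Icc 1 m, (-1) ^ (s + 1) / ((s : ℝ) * Real.log n ^ s) *
          ∑ i ∈ Finset.range (s + 1), (a i s : ℝ) *
            ∑ j ∈ Finset.range (m - s + 1), ∑ r ∈ Finset.range (min i j + 1),
              (b s i j r : ℝ) * Real.log (Real.log n) ^ (i - r) /
                (2 ^ j * Real.log n ^ j)) = T ((n : ℕ) : ℝ) := by
    rw [hTdef]
    simp only [SP.Tf, SP.Hf, SP.llog]
  rw [Real.norm_eq_abs, Real.norm_eq_abs, hTn,
    abs_of_nonneg (by nlinarith : (0:ℝ) ≤ (n : ℝ) * cAux m n)]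
  exact hfinal
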